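/- Let G be the dodecahedral graph, i.e. the generalized Petersen graph GP(10,2) with vertex set {a_i, b_i : i ∈ ℤ/10} and edges a_i ~ a_{i+1}, a_i ~ b_i, b_i ~ b_{i+2}, and let H be the Desargues graph, i.e. the generalized Petersen graph GP(10,3) with vertex set {a_i, b_i : i ∈ ℤ/10} and edges a_i ~ a_{i+1}, a_i ~ b_i, b_i ~ b_{i+3}. Then: (i) G and H are not isomorphic; (ii) with constant initial colorings, for every iteration t the GD-WL test with the shortest-path distances SPD_G and SPD_H does NOT distinguish G and H; and (iii) there exist surjections from the vertices of G and of H onto finite sets, with the induced coarse graphs, such that with constant initial colorings the GD-WL test with the resulting level-1 HDSE encodings (K = 1) DOES distinguish G and H at some iteration. Consequently, GD-WL with HDSE is strictly more expressive than GD-WL with shortest-path distance. -/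

import Mathlib

universe u

/-- The coarse graph on `V'` induced by a graph `G` on `V` and a map `φ : V → V'`. -/
def coarseGraph {V V' : Type*} (G : SimpleGraph V) (φ : V → V') : SimpleGraph V' where
  Adj a b := a ≠ b ∧ ∃ u v : V, φ u = a ∧ φ v = b ∧ G.Adj u v
  symm := by
    constructor
    rintro a b ⟨hab, u, v, hu, hv, huv⟩
    exact ⟨hab.symm, v, u, hv, hu, huv.symm⟩
  loopless := ⟨fun a h => h.1 rfl⟩

/-- The type of iteration-`t` GD-WL colors, starting from colors in `C` and distances in `A`. -/
def WLColor (A C : Type u) : ℕ → Type u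
  | 0 => C
  | (t + 1) => Multiset (A × WLColor A C t)

/-- The GD-WL coloring of a finite vertex set `V` with distance function `d : V → V → A` and
initial coloring `χ⁰ : V → C`: `χ^{t+1}(v) = {{(d v u, χ^t u) : u ∈ V}}` (a multiset). -/
def gdwl {V : Type*} {A C : Type u} [Fintype V]
    (d : V → V → A) (χ0 : V → C) : ∀ t : ℕ, V → WLColor A C t
  | 0 => χ0
  | (t + 1) => fun v =>
      (Finset.univ.val.map (fun u : V => (d v u, gdwl d χ0 t u)) : Multiset (A × WLColor A C t))

/-- The generalized Petersen graph `GP(10,k)` on vertices `Sum.inl i = a_i`, `Sum.inr i = b_i`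
(`i ∈ ℤ/10`), with edges `a_i ~ a_{i+1}`, `a_i ~ b_i`, `b_i ~ b_{i+k}`. -/
def genPetersen (k : ZMod 10) : SimpleGraph (ZMod 10 ⊕ ZMod 10) :=
  SimpleGraph.fromRel (fun x y =>
    (∃ i : ZMod 10, x = Sum.inl i ∧ y = Sum.inl (i + 1)) ∨
    (∃ i : ZMod 10, x = Sum.inl i ∧ y = Sum.inr i) ∨
    (∃ i : ZMod 10, x = Sum.inr i ∧ y = Sum.inr (i + k)))

instance (k : ZMod 10) : DecidableRel (genPetersen k).Adj := fun a b =>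
  inferInstanceAs (Decidable (a ≠ b ∧
    (((∃ i : ZMod 10, a = Sum.inl i ∧ b = Sum.inl (i + 1)) ∨
      (∃ i : ZMod 10, a = Sum.inl i ∧ b = Sum.inr i) ∨
      (∃ i : ZMod 10, a = Sum.inr i ∧ b = Sum.inr (i + k))) ∨
     ((∃ i : ZMod 10, b = Sum.inl i ∧ a = Sum.inl (i + 1)) ∨
      (∃ i : ZMod 10, b = Sum.inl i ∧ a = Sum.inr i) ∨
      (∃ i : ZMod 10, b = Sum.inr i ∧ a = Sum.inr (i + k))))))

/-- Certified BFS: a table `f` satisfying the local conditions equals `G.dist v ·`. -/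
lemma dist_eq_of_table {V : Type*} (G : SimpleGraph V) (v : V) (f : V → ℕ)
    (h0 : f v = 0)
    (hlip : ∀ x y, G.Adj x y → f y ≤ f x + 1)
    (hstep : ∀ u, u ≠ v → ∃ w, G.Adj u w ∧ f w + 1 = f u) :
    ∀ u, G.dist v u = f u := by
  have up : ∀ n u, f u = n → ∃ p : G.Walk v u, p.length = n := by
    intro n
    induction n with
    | zero =>
      intro u hu
      by_cases h : u = v
      · subst h; exact ⟨SimpleGraph.Walk.nil, rfl⟩
      · obtain ⟨w, _, hw⟩ := hstep u h
        omega
    | succ n ih =>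
      intro u hu
      have hne : u ≠ v := by rintro rfl; omega
      obtain ⟨w, haw, hw⟩ := hstep u hne
      obtain ⟨p, hp⟩ := ih w (by omega)
      exact ⟨p.concat haw.symm, by simp [SimpleGraph.Walk.length_concat, hp]⟩
  have low : ∀ (x u : V) (p : G.Walk x u), f u ≤ f x + p.length := by
    intro x u p
    induction p with
    | nil => simp
    | cons h q ih =>
      have := hlip _ _ h
      simp only [SimpleGraph.Walk.length_cons]
      omega
  intro u
  obtain ⟨p, hp⟩ := up (f u) u rfl
  have hub : G.dist v u ≤ f u := hp ▸ SimpleGraph.dist_le p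
  have hr : G.Reachable v u := ⟨p⟩
  obtain ⟨q, hq⟩ := hr.exists_walk_length_eq_dist
  have := low v u q
  omega

/-- Distance table for `GP(10,2)` (dodecahedral graph). -/
def tbl (l : List ℕ) (i j : ZMod 10) : ℕ := l.getD (j - i).val 0

def D2 : ZMod 10 ⊕ ZMod 10 → ZMod 10 ⊕ ZMod 10 → ℕ
  | Sum.inl i, Sum.inl j => tbl [0,1,2,3,4,5,4,3,2,1] i j
  | Sum.inl i, Sum.inr j => tbl [1,2,2,3,3,4,3,3,2,2] i j
  | Sum.inr i, Sum.inl j => tbl [1,2,2,3,3,4,3,3,2,2] i j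
  | Sum.inr i, Sum.inr j => tbl [0,3,1,4,2,5,2,4,1,3] i j

/-- Distance table for `GP(10,3)` (Desargues graph). -/
def D3 : ZMod 10 ⊕ ZMod 10 → ZMod 10 ⊕ ZMod 10 → ℕ
  | Sum.inl i, Sum.inl j => tbl [0,1,2,3,4,5,4,3,2,1] i j
  | Sum.inl i, Sum.inr j => tbl [1,2,3,2,3,4,3,2,3,2] i j
  | Sum.inr i, Sum.inl j => tbl [1,2,3,2,3,4,3,2,3,2] i j
  | Sum.inr i, Sum.inr j => tbl [0,3,4,1,2,5,2,1,4,3] i j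

set_option maxHeartbeats 2000000 in
lemma distG2 : ∀ v u, (genPetersen 2).dist v u = D2 v u := by
  have h0 : ∀ v, D2 v v = 0 := by decide
  have hlip : ∀ v x y, (genPetersen 2).Adj x y → D2 v y ≤ D2 v x + 1 := by decide
  have hstep : ∀ v u, u ≠ v → ∃ w, (genPetersen 2).Adj u w ∧ D2 v w + 1 = D2 v u := by decide
  exact fun v => dist_eq_of_table _ v (D2 v) (h0 v) (hlip v) (hstep v)

set_option maxHeartbeats 2000000 in
lemma distG3 : ∀ v u, (genPetersen 3).dist v u = D3 v u := by
  have h0 : ∀ v, D3 v v = 0 := by decide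
  have hlip : ∀ v x y, (genPetersen 3).Adj x y → D3 v y ≤ D3 v x + 1 := by decide
  have hstep : ∀ v u, u ≠ v → ∃ w, (genPetersen 3).Adj u w ∧ D3 v w + 1 = D3 v u := by decide
  exact fun v => dist_eq_of_table _ v (D3 v) (h0 v) (hlip v) (hstep v)

/-- The common distance distribution multiset. -/
def baseM : Multiset ℕ := Finset.univ.val.map (D2 (Sum.inl 0))

set_option maxHeartbeats 1000000 in
lemma baseM2 : ∀ v, Finset.univ.val.map (D2 v) = baseM := by decide

set_option maxHeartbeats 1000000 in
lemma baseM3 : ∀ v, Finset.univ.val.map (D3 v) = baseM := by decide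

/-- The constant GD-WL colors arising from `baseM`. -/
def cc : ∀ t : ℕ, WLColor ℕ Unit t
  | 0 => ()
  | (t + 1) => baseM.map (fun n => (n, cc t))

lemma gd_const (D : ZMod 10 ⊕ ZMod 10 → ZMod 10 ⊕ ZMod 10 → ℕ)
    (hD : ∀ v, Finset.univ.val.map (D v) = baseM) :
    ∀ (t : ℕ) v, gdwl D (fun _ => ()) t v = cc t := by
  intro t
  induction t with
  | zero => intro v; rfl
  | succ t ih =>
    intro v
    show Finset.univ.val.map (fun u => (D v u, gdwl D (fun _ => ()) t u))
        = baseM.map (fun n => (n, cc t))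
    rw [← hD v, Multiset.map_map]
    exact Multiset.map_congr rfl (fun u _ => by rw [Function.comp_apply, ih u])

/-- 2-coloring of `GP(10,3)` (it is bipartite). -/
def cH : ZMod 10 ⊕ ZMod 10 → Bool
  | Sum.inl i => i.val % 2 == 0
  | Sum.inr i => !(i.val % 2 == 0)

/-- 2-coloring of the vertices of `GP(10,2)` with a monochromatic edge `b₀ ~ b₂`. -/
def cG : ZMod 10 ⊕ ZMod 10 → Bool
  | Sum.inl i => i.val % 2 == 0
  | Sum.inr i => !(i.val % 2 == 0)

lemma cH_valid : ∀ u v, (genPetersen 3).Adj u v → cH u ≠ cH v := by decide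

/-- Let `G = GP(10,2)` be the dodecahedral graph and `H = GP(10,3)` the
Desargues graph. Then (i) `G` and `H` are not isomorphic; (ii) with constant initial colorings,
for every iteration `t` the GD-WL test with the shortest-path distances does **not** distinguish
`G` and `H`; (iii) there exist surjections of the vertex sets onto finite sets such that, with
the induced coarse graphs and the resulting level-1 HDSE encodings
`D(u,v) = (dist_G u v, dist_{G¹} (φ u) (φ v))`, the GD-WL test **does** distinguish `G` and `H`
at some iteration. Hence GD-WL with HDSE is strictly more expressive than GD-WL with SPD. -/
theorem hdse_strictly_more_expressive_than_spd :
    (¬ Nonempty (genPetersen 2 ≃g genPetersen 3)) ∧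
    (∀ t : ℕ,
      Finset.univ.val.map
          (gdwl (fun u v => (genPetersen 2).dist u v) (fun _ => ()) t) =
        Finset.univ.val.map
          (gdwl (fun u v => (genPetersen 3).dist u v) (fun _ => ()) t)) ∧
    (∃ (VG' VH' : Type) (_ : Finite VG') (_ : Finite VH')
        (φG : ZMod 10 ⊕ ZMod 10 → VG') (φH : ZMod 10 ⊕ ZMod 10 → VH'),
      Function.Surjective φG ∧ Function.Surjective φH ∧
      ∃ t : ℕ,
        Finset.univ.val.map
            (gdwl (fun u v =>
              ((genPetersen 2).dist u v,
                (coarseGraph (genPetersen 2) φG).dist (φG u) (φG v)))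
              (fun _ => ()) t) ≠
          Finset.univ.val.map
            (gdwl (fun u v =>
              ((genPetersen 3).dist u v,
                (coarseGraph (genPetersen 3) φH).dist (φH u) (φH v)))
              (fun _ => ()) t)) := by
  refine ⟨?_, ?_, ?_⟩
  · -- (i) not isomorphic: GP(10,3) is bipartite, GP(10,2) has a 5-cycle
    rintro ⟨e⟩
    have h1 : (genPetersen 2).Adj (Sum.inr 0) (Sum.inr 2) := by decide
    have h2 : (genPetersen 2).Adj (Sum.inr 2) (Sum.inr 4) := by decide
    have h3 : (genPetersen 2).Adj (Sum.inr 4) (Sum.inr 6) := by decide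
    have h4 : (genPetersen 2).Adj (Sum.inr 6) (Sum.inr 8) := by decide
    have h5 : (genPetersen 2).Adj (Sum.inr 8) (Sum.inr 0) := by decide
    have valid : ∀ u v, (genPetersen 2).Adj u v → cH (e u) ≠ cH (e v) :=
      fun u v h => cH_valid _ _ (e.map_adj_iff.mpr h)
    have A := valid _ _ h1
    have B := valid _ _ h2
    have C := valid _ _ h3
    have D := valid _ _ h4
    have E := valid _ _ h5
    cases hx0 : cH (e (Sum.inr 0)) <;> cases hx1 : cH (e (Sum.inr 2)) <;>
      cases hx2 : cH (e (Sum.inr 4)) <;> cases hx3 : cH (e (Sum.inr 6)) <;>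
      cases hx4 : cH (e (Sum.inr 8)) <;> simp_all
  · -- (ii) GD-WL with SPD does not distinguish
    intro t
    have e2 : (fun u v => (genPetersen 2).dist u v) = D2 :=
      funext fun u => funext fun v => distG2 u v
    have e3 : (fun u v => (genPetersen 3).dist u v) = D3 :=
      funext fun u => funext fun v => distG3 u v
    rw [e2, e3]
    calc Finset.univ.val.map (gdwl D2 (fun _ => ()) t)
        = Finset.univ.val.map (fun _ => cc t) :=
          Multiset.map_congr rfl (fun v _ => gd_const D2 baseM2 t v)
      _ = Finset.univ.val.map (gdwl D3 (fun _ => ()) t) :=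
          (Multiset.map_congr rfl (fun v _ => gd_const D3 baseM3 t v)).symm
  · -- (iii) coarsenings onto Bool distinguish them
    refine ⟨Bool, Bool, inferInstance, inferInstance, cG, cH, ?_, ?_, 1, ?_⟩
    · intro b
      cases b
      · exact ⟨Sum.inl 1, by decide⟩
      · exact ⟨Sum.inl 0, by decide⟩
    · intro b
      cases b
      · exact ⟨Sum.inl 1, by decide⟩
      · exact ⟨Sum.inl 0, by decide⟩
    · intro h
      have h1 :
          (Finset.univ.val.map (fun v => Finset.univ.val.map (fun u =>
            (((genPetersen 2).dist v u,
              (coarseGraph (genPetersen 2) cG).dist (cG v) (cG u)), ()))) :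
            Multiset (Multiset ((ℕ × ℕ) × Unit))) =
          Finset.univ.val.map (fun v => Finset.univ.val.map (fun u =>
            (((genPetersen 3).dist v u,
              (coarseGraph (genPetersen 3) cH).dist (cH v) (cH u)), ()))) := h
      have hmemL :
          (Finset.univ.val.map (fun u =>
            (((genPetersen 2).dist (Sum.inr 0) u,
              (coarseGraph (genPetersen 2) cG).dist (cG (Sum.inr 0)) (cG u)), ())) :
            Multiset ((ℕ × ℕ) × Unit)) ∈
          (Finset.univ.val.map (fun v => Finset.univ.val.map (fun u =>
            (((genPetersen 2).dist v u,
              (coarseGraph (genPetersen 2) cG).dist (cG v) (cG u)), ()))) :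
            Multiset (Multiset ((ℕ × ℕ) × Unit))) :=
        Multiset.mem_map_of_mem _ (Finset.mem_val.mpr (Finset.mem_univ _))
      rw [h1] at hmemL
      obtain ⟨w, _, hw⟩ := Multiset.mem_map.mp hmemL
      -- the G-color of b₀ contains ((1, 0), ())
      have hadj02 : (genPetersen 2).Adj (Sum.inr 0) (Sum.inr 2) := by decide
      have hd1 : (genPetersen 2).dist (Sum.inr 0) (Sum.inr 2) = 1 :=
        SimpleGraph.dist_eq_one_iff_adj.mpr hadj02
      have hceq : cG (Sum.inr (0 : ZMod 10)) = cG (Sum.inr 2) := by decide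
      have hpair :
          (((genPetersen 2).dist (Sum.inr 0) (Sum.inr 2),
            (coarseGraph (genPetersen 2) cG).dist (cG (Sum.inr 0)) (cG (Sum.inr 2))), ())
            = (((1, 0), ()) : (ℕ × ℕ) × Unit) := by
        rw [hd1, hceq, SimpleGraph.dist_self]
      have hkey : (((1, 0), ()) : (ℕ × ℕ) × Unit) ∈
          (Finset.univ.val.map (fun u =>
            (((genPetersen 3).dist w u,
              (coarseGraph (genPetersen 3) cH).dist (cH w) (cH u)), ())) :
            Multiset ((ℕ × ℕ) × Unit)) := by
        rw [hw, ← hpair]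
        exact Multiset.mem_map_of_mem _ (Finset.mem_val.mpr (Finset.mem_univ _))
      obtain ⟨u, _, hu⟩ := Multiset.mem_map.mp hkey
      have hdist1 : (genPetersen 3).dist w u = 1 := congrArg (Prod.fst ∘ Prod.fst) hu
      have hcd0 : (coarseGraph (genPetersen 3) cH).dist (cH w) (cH u) = 0 :=
        congrArg (Prod.snd ∘ Prod.fst) hu
      have hadj : (genPetersen 3).Adj w u := SimpleGraph.dist_eq_one_iff_adj.mp hdist1
      have hne : cH w ≠ cH u := cH_valid _ _ hadj
      have hcadj : (coarseGraph (genPetersen 3) cH).Adj (cH w) (cH u) :=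
        ⟨hne, w, u, rfl, rfl, hadj⟩
      rcases SimpleGraph.dist_eq_zero_iff_eq_or_not_reachable.mp hcd0 with h' | h'
      · exact hne h'
      · exact h' hcadj.reachable
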